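/- Let f be a rational Herglotz–Nevanlinna function written as f = f↑/f↓, let μ be less than the smallest pole of f and τ > f(μ), and set f̃(λ) := (μ − λ)/(f(λ) − τ) − τ. Then f̃↑(λ) = τ f↑(λ) + (λ − μ − τ²) f↓(λ) and f̃↓(λ) = −f↑(λ) + τ f↓(λ). -/

import Mathlib

open scoped BigOperators

/-- A rational Herglotz–Nevanlinna function
`f(λ) = h₀ λ + h + ∑_{k=1}^d δ_k / (h_k − λ)`
with `h₀ ≥ 0`, `δ_k > 0` and `h₁ < … < h_d`. -/
structure RHN where
  d : ℕ
  h0 : ℝ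
  h : ℝ
  residue : Fin d → ℝ
  pole : Fin d → ℝ
  h0_nonneg : 0 ≤ h0
  residue_pos : ∀ k, 0 < residue k
  pole_strictMono : StrictMono pole

namespace RHN

/-- The value `f(λ)`. -/
noncomputable def eval (f : RHN) (x : ℝ) : ℝ :=
  f.h0 * x + f.h + ∑ k, f.residue k / (f.pole k - x)

/-- The index: `2d + 1` if `h₀ > 0`, and `2d` otherwise. -/
noncomputable def ind (f : RHN) : ℤ :=
  if 0 < f.h0 then 2 * f.d + 1 else 2 * f.d

end RHN

namespace RHN

open Polynomial

/-- `h₀′ := 1/h₀` if `h₀ > 0`, and `1` otherwise. -/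
noncomputable def h0' (f : RHN) : ℝ := if 0 < f.h0 then 1 / f.h0 else 1

/-- The denominator polynomial `f↓(λ) := h₀′ ∏_{k=1}^d (h_k − λ)`. -/
noncomputable def pdown (f : RHN) : Polynomial ℝ :=
  C f.h0' * ∏ k, (C (f.pole k) - X)

/-- The numerator polynomial `f↑ := f · f↓`, written out explicitly. -/
noncomputable def pup (f : RHN) : Polynomial ℝ :=
  C f.h0' * ((C f.h0 * X + C f.h) * ∏ k, (C (f.pole k) - X)
    + ∑ k, C (f.residue k) * ∏ j ∈ Finset.univ.erase k, (C (f.pole j) - X))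

end RHN

open Polynomial

noncomputable section

lemma aux_coprime (p : Polynomial ℝ) (a : ℝ) (h : p.eval a ≠ 0) :
    IsCoprime (X - C a) p := by
  refine ⟨-(C (p.eval a)⁻¹ * (p /ₘ (X - C a))), C (p.eval a)⁻¹, ?_⟩
  have hm := Polynomial.modByMonic_add_div p (X - C a)
  rw [Polynomial.modByMonic_X_sub_C_eq_C_eval] at hm
  have h1 : C (p.eval a)⁻¹ * C (p.eval a) = (1 : Polynomial ℝ) := by
    rw [← C_mul, inv_mul_cancel₀ h, C_1]
  linear_combination h1 - C (p.eval a)⁻¹ * hm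

lemma aux_coprime' (p : Polynomial ℝ) (a : ℝ) (h : p.eval a ≠ 0) :
    IsCoprime p (C a - X) := by
  have : C a - X = -(X - C a) := by ring
  rw [this]
  exact ((aux_coprime p a h).symm).neg_right

lemma lin_degree (a : ℝ) : (C a - X : Polynomial ℝ).degree = 1 := by
  have : (C a - X : Polynomial ℝ) = -(X - C a) := by ring
  rw [this, degree_neg, degree_X_sub_C]

lemma lin_leadingCoeff (a : ℝ) : (C a - X : Polynomial ℝ).leadingCoeff = -1 := by
  have : (C a - X : Polynomial ℝ) = -(X - C a) := by ring
  rw [this, leadingCoeff_neg, (monic_X_sub_C a).leadingCoeff]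

lemma lin_ne_zero (a : ℝ) : (C a - X : Polynomial ℝ) ≠ 0 := by
  intro h
  have := lin_degree a
  rw [h] at this
  simp at this

lemma prod_lin_degree {ι : Type*} (s : Finset ι) (v : ι → ℝ) :
    (∏ k ∈ s, (C (v k) - X) : Polynomial ℝ).degree = s.card := by
  rw [Polynomial.degree_prod]
  simp [lin_degree]

lemma prod_lin_leadingCoeff {ι : Type*} (s : Finset ι) (v : ι → ℝ) :
    (∏ k ∈ s, (C (v k) - X) : Polynomial ℝ).leadingCoeff = (-1) ^ s.card := by
  rw [Polynomial.leadingCoeff_prod]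
  simp [lin_leadingCoeff]

lemma prod_lin_ne_zero {ι : Type*} (s : Finset ι) (v : ι → ℝ) :
    (∏ k ∈ s, (C (v k) - X) : Polynomial ℝ) ≠ 0 :=
  Finset.prod_ne_zero_iff.mpr fun k _ => lin_ne_zero (v k)

namespace RHN

lemma h0'_pos (f : RHN) : 0 < f.h0' := by
  unfold h0'
  split
  · rename_i hh
    positivity
  · exact one_pos

lemma pdown_ne_zero (f : RHN) : f.pdown ≠ 0 :=
  mul_ne_zero (fun h => f.h0'_pos.ne' (by simpa using (C_eq_zero.mp h)))
    (prod_lin_ne_zero _ _)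

lemma degree_pdown (f : RHN) : f.pdown.degree = f.d := by
  rw [pdown, degree_mul, degree_C f.h0'_pos.ne', prod_lin_degree]
  simp

lemma natDegree_pdown (f : RHN) : f.pdown.natDegree = f.d :=
  natDegree_eq_of_degree_eq_some f.degree_pdown

lemma leadingCoeff_pdown (f : RHN) : f.pdown.leadingCoeff = f.h0' * (-1) ^ f.d := by
  rw [pdown, leadingCoeff_mul, leadingCoeff_C, prod_lin_leadingCoeff]
  simp

noncomputable def rem (f : RHN) : Polynomial ℝ :=
  C f.h0' * ∑ k, C (f.residue k) * ∏ j ∈ Finset.univ.erase k, (C (f.pole j) - X)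

lemma pup_eq (f : RHN) : f.pup = (C f.h0 * X + C f.h) * f.pdown + f.rem := by
  unfold pup pdown rem
  ring

lemma degree_rem (f : RHN) : f.rem.degree < (f.d : WithBot ℕ) := by
  unfold rem
  rw [degree_mul, degree_C f.h0'_pos.ne', zero_add]
  refine lt_of_le_of_lt (degree_sum_le _ _) ?_
  rw [Finset.sup_lt_iff (by exact WithBot.bot_lt_coe _)]
  intro k _
  refine lt_of_le_of_lt (degree_mul_le _ _) ?_
  rw [prod_lin_degree]
  refine lt_of_le_of_lt (add_le_add_left degree_C_le _) ?_
  rw [zero_add, Finset.card_erase_of_mem (Finset.mem_univ k), Finset.card_univ,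
    Fintype.card_fin]
  exact_mod_cast Nat.sub_lt k.pos one_pos

lemma pdown_eval (f : RHN) (x : ℝ) :
    f.pdown.eval x = f.h0' * ∏ k, (f.pole k - x) := by
  simp [pdown, eval_prod]

lemma pdown_eval_ne_zero (f : RHN) (x : ℝ) (hx : ∀ k, x ≠ f.pole k) :
    f.pdown.eval x ≠ 0 := by
  rw [pdown_eval]
  exact mul_ne_zero f.h0'_pos.ne'
    (Finset.prod_ne_zero_iff.mpr fun k _ => sub_ne_zero.mpr fun h => hx k h.symm)

lemma pup_eval (f : RHN) (x : ℝ) (hx : ∀ k, x ≠ f.pole k) :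
    f.pup.eval x = f.eval x * f.pdown.eval x := by
  have key : ∀ k : Fin f.d,
      f.residue k / (f.pole k - x) * ∏ j, (f.pole j - x)
        = f.residue k * ∏ j ∈ Finset.univ.erase k, (f.pole j - x) := by
    intro k
    rw [← Finset.mul_prod_erase Finset.univ _ (Finset.mem_univ k)]
    have hk : f.pole k - x ≠ 0 := sub_ne_zero.mpr fun h => hx k h.symm
    field_simp
  simp only [pup, eval_mul, eval_add, eval_finset_sum, eval_prod, eval_C, eval_X, eval_sub]
  rw [RHN.eval, pdown_eval]
  have hs : (∑ k, f.residue k / (f.pole k - x)) * (∏ j, (f.pole j - x))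
      = ∑ k, f.residue k * ∏ j ∈ Finset.univ.erase k, (f.pole j - x) := by
    rw [Finset.sum_mul]
    exact Finset.sum_congr rfl fun k _ => key k
  linear_combination (-f.h0') * hs

lemma pup_eval_pole_ne_zero (f : RHN) (k : Fin f.d) :
    f.pup.eval (f.pole k) ≠ 0 := by
  have hinj := f.pole_strictMono.injective
  simp only [pup, eval_mul, eval_add, eval_finset_sum, eval_prod, eval_C, eval_X, eval_sub]
  have h1 : (∏ j, (f.pole j - f.pole k)) = 0 :=
    Finset.prod_eq_zero (Finset.mem_univ k) (by simp)
  have h2 : (∑ k' : Fin f.d, f.residue k' * ∏ j ∈ Finset.univ.erase k',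
      (f.pole j - f.pole k))
      = f.residue k * ∏ j ∈ Finset.univ.erase k, (f.pole j - f.pole k) := by
    refine Finset.sum_eq_single k ?_ (by simp)
    intro k' _ hk'
    refine mul_eq_zero_of_right _ (Finset.prod_eq_zero (Finset.mem_erase.mpr ⟨?_, Finset.mem_univ k⟩) (by simp))
    exact fun h => hk' h.symm
  rw [h1, h2, mul_zero, zero_add]
  refine mul_ne_zero f.h0'_pos.ne' (mul_ne_zero (f.residue_pos k).ne' ?_)
  refine Finset.prod_ne_zero_iff.mpr fun j hj => sub_ne_zero.mpr fun h => ?_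
  exact (Finset.mem_erase.mp hj).1 (hinj h)

lemma isCoprime_pup_pdown (f : RHN) : IsCoprime f.pup f.pdown := by
  rw [pdown]
  refine IsCoprime.mul_right ?_ (IsCoprime.prod_right fun k _ =>
    aux_coprime' _ _ (f.pup_eval_pole_ne_zero k))
  exact ⟨0, C f.h0'⁻¹, by
    rw [zero_mul, zero_add, ← C_mul, inv_mul_cancel₀ f.h0'_pos.ne', C_1]⟩

end RHN
end

open Polynomial in
/-- if `g` represents `f̃(λ) = (μ − λ)/(f(λ) − τ) − τ` with `μ` below the
smallest pole of `f` and `τ > f(μ)`, then `f̃↑ = τ f↑ + (λ − μ − τ²) f↓` and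
`f̃↓ = −f↑ + τ f↓`. -/
theorem tilde_transform_up_down (f g : RHN) (μ τ : ℝ)
    (hμ : ∀ k, μ < f.pole k) (hτ : f.eval μ < τ)
    (hg : ∀ x : ℝ, (∀ k, x ≠ f.pole k) → (∀ k, x ≠ g.pole k) → f.eval x ≠ τ →
      g.eval x = (μ - x) / (f.eval x - τ) - τ) :
    g.pup = C τ * f.pup + (X - C μ - C (τ ^ 2)) * f.pdown ∧
    g.pdown = -f.pup + C τ * f.pdown := by
  classical
  set P : Polynomial ℝ := C τ * f.pup + (X - C μ - C (τ ^ 2)) * f.pdown with hP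
  set Q : Polynomial ℝ := -f.pup + C τ * f.pdown with hQdef
  have hμne : ∀ k, μ ≠ f.pole k := fun k => (hμ k).ne
  have hDμ : f.pdown.eval μ ≠ 0 := f.pdown_eval_ne_zero μ hμne
  have hQμ : Q.eval μ ≠ 0 := by
    have hQe : Q.eval μ = (τ - f.eval μ) * f.pdown.eval μ := by
      rw [hQdef]
      simp only [eval_add, eval_mul, eval_neg, eval_C, f.pup_eval μ hμne]
      ring
    rw [hQe]
    exact mul_ne_zero (sub_ne_zero.mpr (ne_of_gt hτ)) hDμ
  have hQ0 : Q ≠ 0 := fun h => hQμ (by rw [h]; simp)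
  -- the crossed polynomial identity
  have key : g.pup * Q = P * g.pdown := by
    apply Polynomial.eq_of_infinite_eval_eq
    have hfin : (Set.range f.pole ∪ Set.range g.pole ∪ { x | Q.IsRoot x }).Finite :=
      ((Set.finite_range _).union (Set.finite_range _)).union
        (Polynomial.finite_setOf_isRoot hQ0)
    refine Set.Infinite.mono ?_ hfin.infinite_compl
    intro x hx
    simp only [Set.mem_compl_iff, Set.mem_union, Set.mem_range, Set.mem_setOf_eq, not_or,
      not_exists, IsRoot] at hx
    obtain ⟨⟨hxf, hxg⟩, hxQ⟩ := hx
    have hxf' : ∀ k, x ≠ f.pole k := fun k h => hxf k h.symm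
    have hxg' : ∀ k, x ≠ g.pole k := fun k h => hxg k h.symm
    have hDx : f.pdown.eval x ≠ 0 := f.pdown_eval_ne_zero x hxf'
    have hQx : Q.eval x = (τ - f.eval x) * f.pdown.eval x := by
      rw [hQdef]
      simp only [eval_add, eval_mul, eval_neg, eval_C, f.pup_eval x hxf']
      ring
    have hfτ : f.eval x ≠ τ := by
      intro h
      apply hxQ
      rw [hQx, h]
      ring
    have hgx := hg x hxf' hxg' hfτ
    show (g.pup * Q).eval x = (P * g.pdown).eval x
    have hPx : P.eval x = τ * f.pup.eval x + (x - μ - τ ^ 2) * f.pdown.eval x := by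
      rw [hP]; simp
    rw [eval_mul, eval_mul, g.pup_eval x hxg', hgx, hQx, hPx, f.pup_eval x hxf']
    have h1 : f.eval x - τ ≠ 0 := sub_ne_zero.mpr hfτ
    field_simp
    ring
  -- coprimality of P and Q
  obtain ⟨u, v, huv⟩ := f.isCoprime_pup_pdown
  have combo : (u * C τ + v) * P + (v * C τ - u * (X - C μ - C (τ ^ 2))) * Q = X - C μ := by
    have h2 : (u * C τ + v) * P + (v * C τ - u * (X - C μ - C (τ ^ 2))) * Q
        = (X - C μ) * (u * f.pup + v * f.pdown) := by
      rw [hP, hQdef, C_pow]; ring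
    rw [h2, huv, mul_one]
  have hPQ : IsCoprime P Q := by
    obtain ⟨a, b, hab⟩ := aux_coprime Q μ hQμ
    exact ⟨a * (u * C τ + v), a * (v * C τ - u * (X - C μ - C (τ ^ 2))) + b, by
      linear_combination a * combo + hab⟩
  have hGG := g.isCoprime_pup_pdown
  have hd1 : g.pdown ∣ Q := hGG.symm.dvd_of_dvd_mul_left ⟨P, by linear_combination key⟩
  have hd2 : Q ∣ g.pdown := hPQ.symm.dvd_of_dvd_mul_left ⟨g.pup, by linear_combination -key⟩
  obtain ⟨w, hw⟩ := associated_of_dvd_dvd hd2 hd1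
  obtain ⟨c, hcu, hcC⟩ := Polynomial.isUnit_iff.mp w.isUnit
  have hc0 : c ≠ 0 := hcu.ne_zero
  have hgdown : g.pdown = C c * Q := by rw [← hw, ← hcC]; ring
  have hgup : g.pup = C c * P := by
    apply mul_right_cancel₀ hQ0
    rw [key, hgdown]; ring
  -- the low-degree remainder
  set L : Polynomial ℝ := C g.h0 * X + C g.h with hL
  have hrem : C c * (P - L * Q) = g.rem := by
    have h3 := g.pup_eq
    rw [hgup, hgdown, ← hL] at h3
    linear_combination h3
  have hQdeg2 : Q.degree = (g.d : WithBot ℕ) := by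
    rw [← g.degree_pdown, hgdown, degree_C_mul hc0]
  have hEdeg : (P - L * Q).degree < Q.degree := by
    have h4 : (P - L * Q).degree = g.rem.degree := by
      rw [← hrem, degree_C_mul hc0]
    rw [h4, hQdeg2]
    exact g.degree_rem
  have hLQcoeff : ∀ n : ℕ, (L * Q).coeff (n + 1) = g.h0 * Q.coeff n + g.h * Q.coeff (n + 1) := by
    intro n
    rw [hL, add_mul, coeff_add, mul_assoc, coeff_C_mul, coeff_X_mul, coeff_C_mul]
  -- case split on f.h0
  rcases f.h0_nonneg.lt_or_eq with hpos | hzero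
  · -- case 0 < f.h0
    have hh0' : f.h0' = 1 / f.h0 := by
      unfold RHN.h0'
      rw [if_pos hpos]
    have hd1' : ((1 : WithBot ℕ) + (f.d : ℕ)) = ((f.d + 1 : ℕ) : WithBot ℕ) := by
      push_cast; ring
    have hmaindeg : ((C f.h0 * X + C f.h) * f.pdown).degree = ((f.d + 1 : ℕ) : WithBot ℕ) := by
      rw [degree_mul, degree_linear hpos.ne', f.degree_pdown, hd1']
    have hremlt : f.rem.degree < ((C f.h0 * X + C f.h) * f.pdown).degree := by
      rw [hmaindeg]
      refine lt_of_lt_of_le f.degree_rem ?_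
      exact_mod_cast Nat.le_succ f.d
    have hpupdeg : f.pup.degree = ((f.d + 1 : ℕ) : WithBot ℕ) := by
      rw [f.pup_eq, degree_add_eq_left_of_degree_lt hremlt, hmaindeg]
    have hpuplead : f.pup.leadingCoeff = (-1) ^ f.d := by
      rw [f.pup_eq, leadingCoeff_add_of_degree_lt' hremlt, leadingCoeff_mul,
        leadingCoeff_linear hpos.ne', f.leadingCoeff_pdown, hh0']
      field_simp
    have hCτlt : (C τ * f.pdown).degree < (-f.pup).degree := by
      rw [degree_neg, hpupdeg]
      refine lt_of_le_of_lt (degree_mul_le _ _) ?_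
      refine lt_of_le_of_lt (add_le_add_left degree_C_le _) ?_
      rw [zero_add, f.degree_pdown]
      exact_mod_cast Nat.lt_succ_self f.d
    have hQdeg : Q.degree = ((f.d + 1 : ℕ) : WithBot ℕ) := by
      rw [hQdef, degree_add_eq_left_of_degree_lt hCτlt, degree_neg, hpupdeg]
    have hQlead : Q.leadingCoeff = -(-1) ^ f.d := by
      rw [hQdef, leadingCoeff_add_of_degree_lt' hCτlt, leadingCoeff_neg, hpuplead]
    have hQnat : Q.natDegree = f.d + 1 := natDegree_eq_of_degree_eq_some hQdeg
    have hQc1 : Q.coeff (f.d + 1) = -(-1) ^ f.d := by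
      rw [← hQnat, coeff_natDegree, hQlead]
    have hQc2 : Q.coeff (f.d + 2) = 0 := by
      apply coeff_eq_zero_of_degree_lt
      rw [hQdeg]
      exact_mod_cast Nat.lt_succ_self (f.d + 1)
    have hPdeg : P.degree ≤ ((f.d + 1 : ℕ) : WithBot ℕ) := by
      rw [hP]
      refine le_trans (degree_add_le _ _) (max_le ?_ ?_)
      · refine le_trans (degree_mul_le _ _) ?_
        refine le_trans (add_le_add_left degree_C_le _) ?_
        rw [zero_add, hpupdeg]
      · refine le_trans (degree_mul_le _ _) ?_
        have hXc : (X - C μ - C (τ ^ 2) : Polynomial ℝ) = X - C (μ + τ ^ 2) := by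
          rw [C_add]; ring
        rw [hXc, degree_X_sub_C, f.degree_pdown, hd1']
    have hPc : P.coeff (f.d + 2) = 0 := by
      apply coeff_eq_zero_of_degree_lt
      refine lt_of_le_of_lt hPdeg ?_
      exact_mod_cast Nat.lt_succ_self (f.d + 1)
    have hEc : (P - L * Q).coeff (f.d + 2) = 0 := by
      apply coeff_eq_zero_of_degree_lt
      refine lt_of_lt_of_le hEdeg ?_
      rw [hQdeg]
      exact_mod_cast Nat.le_succ (f.d + 1)
    have h10 : (L * Q).coeff (f.d + 2) = g.h0 * Q.coeff (f.d + 1) + g.h * Q.coeff (f.d + 2) := by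
      have h := hLQcoeff (f.d + 1)
      rwa [show f.d + 1 + 1 = f.d + 2 by omega] at h
    rw [coeff_sub, hPc, h10, hQc1, hQc2] at hEc
    have h5 : (-1 : ℝ) ^ f.d ≠ 0 := by positivity
    have h8 : -(-1 : ℝ) ^ f.d ≠ 0 := neg_ne_zero.mpr h5
    have hgh0 : g.h0 = 0 := by
      have h9 : g.h0 * -(-1 : ℝ) ^ f.d = 0 := by linarith [hEc]
      exact (mul_eq_zero.mp h9).resolve_right h8
    have hgh0' : g.h0' = 1 := by
      unfold RHN.h0'
      rw [hgh0]
      simp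
    have hgd : (g.d : WithBot ℕ) = ((f.d + 1 : ℕ) : WithBot ℕ) := by
      rw [← hQdeg2, hQdeg]
    have hgd' : g.d = f.d + 1 := by exact_mod_cast hgd
    have hc1 : c = 1 := by
      have h6 : g.pdown.leadingCoeff = (-1) ^ g.d := by
        rw [g.leadingCoeff_pdown, hgh0', one_mul]
      have h7 : g.pdown.leadingCoeff = c * -(-1) ^ f.d := by
        rw [hgdown, leadingCoeff_mul, leadingCoeff_C, hQlead]
      rw [h6, hgd'] at h7
      have h9 : (1 : ℝ) * -(-1 : ℝ) ^ f.d = c * -(-1 : ℝ) ^ f.d := by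
        rw [one_mul, ← h7, pow_succ]; ring
      exact (mul_right_cancel₀ h8 h9).symm
    refine ⟨?_, ?_⟩
    · rw [hgup, hc1, C_1, one_mul]
    · rw [hgdown, hc1, C_1, one_mul]
  · -- case f.h0 = 0
    have hh0' : f.h0' = 1 := by
      unfold RHN.h0'
      rw [if_neg]
      rw [← hzero]
      exact lt_irrefl 0
    have hτh : f.h < τ := by
      refine lt_of_le_of_lt ?_ hτ
      rw [RHN.eval, ← hzero]
      have : (0 : ℝ) ≤ ∑ k, f.residue k / (f.pole k - μ) :=
        Finset.sum_nonneg fun k _ =>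
          le_of_lt (div_pos (f.residue_pos k) (sub_pos.mpr (hμ k)))
      linarith
    have hCh : (C f.h0 * X + C f.h : Polynomial ℝ) = C f.h := by
      rw [← hzero, C_0, zero_mul, zero_add]
    have hpupdegle : f.pup.degree ≤ (f.d : WithBot ℕ) := by
      rw [f.pup_eq, hCh]
      refine le_trans (degree_add_le _ _) (max_le ?_ (le_of_lt f.degree_rem))
      refine le_trans (degree_mul_le _ _) ?_
      refine le_trans (add_le_add_left degree_C_le _) ?_
      rw [zero_add, f.degree_pdown]
    have hpdc : f.pdown.coeff f.d = (-1) ^ f.d := by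
      have := f.leadingCoeff_pdown
      rw [hh0', one_mul] at this
      calc f.pdown.coeff f.d = f.pdown.coeff f.pdown.natDegree := by rw [f.natDegree_pdown]
        _ = f.pdown.leadingCoeff := coeff_natDegree
        _ = (-1) ^ f.d := this
    have hpupcoeff : f.pup.coeff f.d = f.h * (-1) ^ f.d := by
      rw [f.pup_eq, hCh, coeff_add, coeff_C_mul, hpdc]
      have : f.rem.coeff f.d = 0 := coeff_eq_zero_of_degree_lt f.degree_rem
      rw [this, add_zero]
    have hQdegle : Q.degree ≤ (f.d : WithBot ℕ) := by
      rw [hQdef]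
      refine le_trans (degree_add_le _ _) (max_le ?_ ?_)
      · rw [degree_neg]; exact hpupdegle
      · refine le_trans (degree_mul_le _ _) ?_
        refine le_trans (add_le_add_left degree_C_le _) ?_
        rw [zero_add, f.degree_pdown]
    have hQcoeff : Q.coeff f.d = (τ - f.h) * (-1) ^ f.d := by
      rw [hQdef, coeff_add, coeff_neg, hpupcoeff, coeff_C_mul, hpdc]
      ring
    have hτh0 : τ - f.h ≠ 0 := sub_ne_zero.mpr (ne_of_gt hτh)
    have h5 : (-1 : ℝ) ^ f.d ≠ 0 := by positivity
    have hQdeg : Q.degree = (f.d : WithBot ℕ) :=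
      degree_eq_of_le_of_coeff_ne_zero hQdegle
        (by rw [hQcoeff]; exact mul_ne_zero hτh0 h5)
    have hQnat : Q.natDegree = f.d := natDegree_eq_of_degree_eq_some hQdeg
    have hQc1 : Q.coeff (f.d + 1) = 0 := by
      apply coeff_eq_zero_of_degree_lt
      rw [hQdeg]
      exact_mod_cast Nat.lt_succ_self f.d
    have hd1' : ((1 : WithBot ℕ) + (f.d : ℕ)) = ((f.d + 1 : ℕ) : WithBot ℕ) := by
      push_cast; ring
    have hXc : (X - C μ - C (τ ^ 2) : Polynomial ℝ) = X - C (μ + τ ^ 2) := by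
      rw [C_add]; ring
    have hP2deg : ((X - C μ - C (τ ^ 2)) * f.pdown).degree = ((f.d + 1 : ℕ) : WithBot ℕ) := by
      rw [degree_mul, hXc, degree_X_sub_C, f.degree_pdown, hd1']
    have hP1lt : (C τ * f.pup).degree < ((X - C μ - C (τ ^ 2)) * f.pdown).degree := by
      rw [hP2deg]
      refine lt_of_le_of_lt (degree_mul_le _ _) ?_
      refine lt_of_le_of_lt (add_le_add_left degree_C_le _) ?_
      rw [zero_add]
      refine lt_of_le_of_lt hpupdegle ?_
      exact_mod_cast Nat.lt_succ_self f.d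
    have hPdeg : P.degree = ((f.d + 1 : ℕ) : WithBot ℕ) := by
      rw [hP, degree_add_eq_right_of_degree_lt hP1lt, hP2deg]
    have hPnat : P.natDegree = f.d + 1 := natDegree_eq_of_degree_eq_some hPdeg
    have hPlead : P.leadingCoeff = (-1) ^ f.d := by
      rw [hP, leadingCoeff_add_of_degree_lt hP1lt, leadingCoeff_mul, hXc,
        (monic_X_sub_C _).leadingCoeff, one_mul, f.leadingCoeff_pdown, hh0', one_mul]
    have hPc : P.coeff (f.d + 1) = (-1) ^ f.d := by
      rw [← hPnat, coeff_natDegree, hPlead]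
    have hEc : (P - L * Q).coeff (f.d + 1) = 0 := by
      apply coeff_eq_zero_of_degree_lt
      refine lt_of_lt_of_le hEdeg ?_
      rw [hQdeg]
      exact_mod_cast Nat.le_succ f.d
    rw [coeff_sub, hPc, hLQcoeff f.d, hQcoeff, hQc1] at hEc
    have hkey2 : g.h0 * (τ - f.h) = 1 := by
      have h6 : ((-1 : ℝ) ^ f.d) * (1 - g.h0 * (τ - f.h)) = 0 := by linarith [hEc]
      rcases mul_eq_zero.mp h6 with h | h
      · exact absurd h h5
      · linarith
    have hgh0pos : 0 < g.h0 := by nlinarith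
    have hgh0' : g.h0' = τ - f.h := by
      unfold RHN.h0'
      rw [if_pos hgh0pos, div_eq_iff hgh0pos.ne']
      linarith [hkey2]
    have hgd : (g.d : WithBot ℕ) = (f.d : WithBot ℕ) := by
      rw [← hQdeg2, hQdeg]
    have hgd' : g.d = f.d := by exact_mod_cast hgd
    have hQlead : Q.leadingCoeff = (τ - f.h) * (-1) ^ f.d := by
      rw [Polynomial.leadingCoeff, hQnat, hQcoeff]
    have hc1 : c = 1 := by
      have h6 : g.pdown.leadingCoeff = (τ - f.h) * (-1) ^ g.d := by
        rw [g.leadingCoeff_pdown, hgh0']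
      have h7 : g.pdown.leadingCoeff = c * ((τ - f.h) * (-1) ^ f.d) := by
        rw [hgdown, leadingCoeff_mul, leadingCoeff_C, hQlead]
      rw [h6, hgd'] at h7
      have h8 : (τ - f.h) * (-1 : ℝ) ^ f.d ≠ 0 := mul_ne_zero hτh0 h5
      have h9 : (1 : ℝ) * ((τ - f.h) * (-1 : ℝ) ^ f.d) = c * ((τ - f.h) * (-1 : ℝ) ^ f.d) := by
        rw [one_mul]; exact h7
      exact (mul_right_cancel₀ h8 h9).symm
    refine ⟨?_, ?_⟩
    · rw [hgup, hc1, C_1, one_mul]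
    · rw [hgdown, hc1, C_1, one_mul]
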